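/- Let n ≥ 3, let M be a connected topological (n−1)-manifold, and let r : M → ℝⁿ be a continuous map such that r(M) is bounded, M is complete with respect to the induced length pseudometric d_r, r is locally convex at every point of M, and r is strictly locally convex at a point o ∈ M, witnessed by a closed convex set K₀ and a nonzero vector u ∈ ℝⁿ with K₀ \ {r(o)} ⊆ {x | ⟪x − r(o), u⟫ > 0}. Then a convex part centered at o exists: there exist z > 0, a compact convex set K ⊆ ℝⁿ with nonempty interior, and a connected open subset 𝒞 of M with o ∈ 𝒞, such that r restricted to 𝒞 is a homeomorphism onto C := frontier(K) ∩ {x | ⟪x − r(o), u⟫ < z}, and frontier(K) \ C ⊆ {x | ⟪x − r(o), u⟫ = z}. -/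

import Mathlib

open scoped RealInnerProductSpace ENNReal
open Set

/-- Euclidean `n`-space `ℝⁿ`. -/
noncomputable abbrev Euc (n : ℕ) : Type := EuclideanSpace ℝ (Fin n)

/-- `M` is a topological `d`-manifold: every point has an open neighborhood
homeomorphic to `ℝ^d` (Hausdorffness is assumed separately via `T2Space`). -/
def IsTopManifoldOfDim (M : Type*) [TopologicalSpace M] (d : ℕ) : Prop :=
  ∀ p : M, ∃ U : Set M, IsOpen U ∧ p ∈ U ∧ Nonempty (U ≃ₜ Euc d)

/-- `r : M → ℝⁿ` is locally convex at `p` (in the sense of Bouligand): some open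
neighborhood `U` of `p` is mapped by `r` homeomorphically onto an open subset `V` of
the frontier of a closed convex body `K`, with `r p ∈ V`. -/
def IsLocallyConvexAt {M : Type*} [TopologicalSpace M] {n : ℕ}
    (r : M → Euc n) (p : M) : Prop :=
  ∃ (U : Set M) (K V : Set (Euc n)),
    IsOpen U ∧ p ∈ U ∧
    IsClosed K ∧ Convex ℝ K ∧ (interior K).Nonempty ∧
    V ⊆ frontier K ∧ r p ∈ V ∧ (∃ W : Set (Euc n), IsOpen W ∧ V = W ∩ frontier K) ∧
    ∃ e : U ≃ₜ V, ∀ x : U, (e x : Euc n) = r x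

/-- `r : M → ℝⁿ` is strictly locally convex at `p`: locally convex at `p`, where
moreover the convex body `K` can be chosen together with a nonzero vector `u` such that
`K \ {r p}` lies in the open half-space `{x | ⟪x - r p, u⟫ > 0}`. -/
def IsStrictlyLocallyConvexAt {M : Type*} [TopologicalSpace M] {n : ℕ}
    (r : M → Euc n) (p : M) : Prop :=
  ∃ (U : Set M) (K V : Set (Euc n)) (u : Euc n),
    u ≠ 0 ∧ (∀ x ∈ K \ {r p}, 0 < ⟪x - r p, u⟫) ∧
    IsOpen U ∧ p ∈ U ∧
    IsClosed K ∧ Convex ℝ K ∧ (interior K).Nonempty ∧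
    V ⊆ frontier K ∧ r p ∈ V ∧ (∃ W : Set (Euc n), IsOpen W ∧ V = W ∩ frontier K) ∧
    ∃ e : U ≃ₜ V, ∀ x : U, (e x : Euc n) = r x

/-- The length (total variation) of the image under `r` of a path `γ` in `M`. -/
noncomputable def pathLength {M : Type*} [TopologicalSpace M] {n : ℕ}
    (r : M → Euc n) {p q : M} (γ : Path p q) : ℝ≥0∞ :=
  eVariationOn (fun t => r (γ t)) Set.univ

/-- The length pseudometric on `M` induced by `r`. -/
noncomputable def lengthDist {M : Type*} [TopologicalSpace M] {n : ℕ}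
    (r : M → Euc n) (p q : M) : ℝ≥0∞ :=
  ⨅ γ : Path p q, pathLength r γ

/-- `M` is complete with respect to the induced length pseudometric: every sequence
that is Cauchy for `lengthDist r` converges in the topology of `M`. -/
def CompleteWrtLengthDist {M : Type*} [TopologicalSpace M] {n : ℕ}
    (r : M → Euc n) : Prop :=
  ∀ x : ℕ → M,
    (∀ ε : ℝ≥0∞, 0 < ε → ∃ N : ℕ, ∀ m ≥ N, ∀ k ≥ N, lengthDist r (x m) (x k) < ε) →
    ∃ p : M, Filter.Tendsto x Filter.atTop (nhds p)

/-- The boundary cap of a compact convex body below level `z` is preconnected. -/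
lemma cap_isPreconnected {n : ℕ} {K : Set (Euc n)} {a u : Euc n} {z : ℝ}
    (hK : IsCompact K) (hKc : Convex ℝ K) (haf : a ∈ frontier K) (hz : 0 < z)
    (hnn : ∀ y ∈ K, 0 ≤ ⟪y - a, u⟫)
    (hwex : ∀ x ∈ frontier K, ⟪x - a, u⟫ < z → ∃ w ∈ interior K, ⟪x - a, u⟫ < ⟪w - a, u⟫) :
    IsPreconnected (frontier K ∩ {x | ⟪x - a, u⟫ < z}) := by
  have hfrK : frontier K ⊆ K := hK.isClosed.frontier_subset
  have haK : a ∈ K := hfrK haf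
  have hfa : ⟪a - a, u⟫ = 0 := by simp
  apply isPreconnected_of_forall a
  rintro x ⟨hxf, hxz⟩
  have hxz' : ⟪x - a, u⟫ < z := hxz
  obtain ⟨w, hwint, hwgt⟩ := hwex x hxf hxz'
  have hwK : w ∈ K := interior_subset hwint
  have hxK : x ∈ K := hfrK hxf
  have hxnn : 0 ≤ ⟪x - a, u⟫ := hnn x hxK
  -- translate K so that w goes to the origin
  set s : Set (Euc n) := (fun v => w + v) ⁻¹' K with hs_def
  have hsc : Convex ℝ s := by
    intro p hp q hq b c hb hc hbc
    have hco : w + (b • p + c • q) = b • (w + p) + c • (w + q) := by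
      calc w + (b • p + c • q) = (b + c) • w + (b • p + c • q) := by rw [hbc, one_smul]
        _ = b • (w + p) + c • (w + q) := by rw [add_smul, smul_add, smul_add]; abel
    show w + (b • p + c • q) ∈ K
    rw [hco]
    exact hKc hp hq hb hc hbc
  have hs0 : s ∈ nhds 0 := by
    have hc : ContinuousAt (fun v : Euc n => w + v) 0 :=
      (continuous_const.add continuous_id).continuousAt
    have hK𝓝 : K ∈ nhds ((fun v : Euc n => w + v) 0) := by
      simpa using mem_interior_iff_mem_nhds.mp hwint
    exact hc.preimage_mem_nhds hK𝓝
  have habs : Absorbent ℝ s := absorbent_nhds_zero hs0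
  have hsbd : Bornology.IsVonNBounded ℝ s := by
    apply NormedSpace.isVonNBounded_of_isBounded
    obtain ⟨R, hR⟩ := (Metric.isBounded_iff_subset_closedBall w).mp hK.isBounded
    apply (Metric.isBounded_closedBall (x := (0 : Euc n)) (r := R)).subset
    intro v hv
    have := hR hv
    simpa [Metric.mem_closedBall, dist_eq_norm] using this
  have hfr : ∀ v : Euc n, v ∈ frontier s ↔ w + v ∈ frontier K := by
    intro v
    have h := (Homeomorph.addLeft w).preimage_frontier K
    have : frontier s = (fun v : Euc n => w + v) ⁻¹' frontier K := h.symm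
    rw [this]; rfl
  set g : Euc n → ℝ := fun y => gauge s (y - w) with hg_def
  have hmem_s : ∀ y, y ∈ K → y - w ∈ s := by
    intro y hy
    show w + (y - w) ∈ K
    rwa [add_sub_cancel]
  have hgle : ∀ y ∈ K, g y ≤ 1 := fun y hy => gauge_le_one_of_mem (hmem_s y hy)
  have hfw : ⟪x - a, u⟫ < ⟪w - a, u⟫ := hwgt
  -- points on the segment from x to a
  have hseg : ∀ y ∈ segment ℝ x a, y ∈ K ∧ ⟪y - a, u⟫ ≤ ⟪x - a, u⟫ := by
    rintro y ⟨t₁, t₂, ht₁, ht₂, hsum, rfl⟩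
    refine ⟨hKc hxK haK ht₁ ht₂ hsum, ?_⟩
    have hy : t₁ • x + t₂ • a - a = t₁ • (x - a) := by
      have h2 : t₂ = 1 - t₁ := by linarith
      rw [h2]; module
    rw [hy, real_inner_smul_left]
    nlinarith
  have hgpos : ∀ y ∈ segment ℝ x a, 0 < g y := by
    intro y hy
    obtain ⟨hyK, hyle⟩ := hseg y hy
    have hyw : y - w ≠ 0 := by
      intro h
      have : y = w := by rwa [sub_eq_zero] at h
      rw [this] at hyle; linarith
    exact (gauge_pos habs hsbd).mpr hyw
  -- the radial projection
  set ρ : Euc n → Euc n := fun y => w + (g y)⁻¹ • (y - w) with hρ_def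
  have hρfr : ∀ y ∈ segment ℝ x a, ρ y ∈ frontier K := by
    intro y hy
    have hgy := hgpos y hy
    have h1 : gauge s ((g y)⁻¹ • (y - w)) = 1 := by
      rw [gauge_smul_of_nonneg (inv_nonneg.mpr hgy.le)]
      simp only [smul_eq_mul]
      field_simp
      rfl
    have h2 : (g y)⁻¹ • (y - w) ∈ frontier s :=
      (gauge_eq_one_iff_mem_frontier hsc hs0).mp h1
    exact (hfr _).mp h2
  have hρeq : ∀ y, y ∈ frontier K → ρ y = y := by
    intro y hy
    have h1 : gauge s (y - w) = 1 := by
      apply (gauge_eq_one_iff_mem_frontier hsc hs0).mpr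
      rw [hfr, add_sub_cancel]; exact hy
    show w + (g y)⁻¹ • (y - w) = y
    rw [show g y = gauge s (y - w) from rfl, h1]
    simp
  have hρf : ∀ y ∈ segment ℝ x a, ⟪ρ y - a, u⟫ < z := by
    intro y hy
    obtain ⟨hyK, hyle⟩ := hseg y hy
    have hgy := hgpos y hy
    have hgy1 := hgle y hyK
    have hinv : 1 ≤ (g y)⁻¹ := (one_le_inv₀ hgy).mpr hgy1
    have hρy : ρ y - a = (w - a) + (g y)⁻¹ • (y - w) := by
      show w + (g y)⁻¹ • (y - w) - a = _
      abel
    have hiw : ⟪y - w, u⟫ = ⟪y - a, u⟫ - ⟪w - a, u⟫ := by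
      rw [← inner_sub_left]; congr 1; abel
    rw [hρy, inner_add_left, real_inner_smul_left, hiw]
    have hneg : ⟪y - a, u⟫ - ⟪w - a, u⟫ < 0 := by linarith
    nlinarith
  refine ⟨ρ '' segment ℝ x a, ?_, ?_, ?_, ?_⟩
  · rintro p ⟨y, hy, rfl⟩
    exact ⟨hρfr y hy, hρf y hy⟩
  · exact ⟨a, right_mem_segment ℝ x a, hρeq a haf⟩
  · exact ⟨x, left_mem_segment ℝ x a, hρeq x hxf⟩
  · apply (convex_segment x a).isPreconnected.image
    apply ContinuousOn.add continuousOn_const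
    refine ContinuousOn.smul (f := fun y => (g y)⁻¹) (g := fun y => y - w) ?_ ?_
    · apply ContinuousOn.inv₀
      · exact ((continuous_gauge hsc hs0).comp (continuous_id.sub continuous_const)).continuousOn
      · intro y hy; exact (hgpos y hy).ne'
    · exact (continuous_id.sub continuous_const).continuousOn

lemma slice_isBounded {n : ℕ} {K₀ : Set (Euc n)} {a u : Euc n} {c : ℝ}
    (hK₀ : IsClosed K₀) (hK₀c : Convex ℝ K₀) (haK : a ∈ K₀) (hc : 0 ≤ c)
    (hpos : ∀ x ∈ K₀, x ≠ a → 0 < ⟪x - a, u⟫) :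
    Bornology.IsBounded (K₀ ∩ {x | ⟪x - a, u⟫ ≤ c}) := by
  by_contra hb
  have hseq : ∀ k : ℕ, ∃ x, x ∈ K₀ ∧ ⟪x - a, u⟫ ≤ c ∧ (k + 1 : ℝ) < dist x a := by
    intro k
    rw [Metric.isBounded_iff_subset_closedBall a] at hb
    push_neg at hb
    obtain ⟨x, hx, hx2⟩ := Set.not_subset.mp (hb (k + 1 : ℝ))
    refine ⟨x, hx.1, hx.2, ?_⟩
    simpa [Metric.mem_closedBall, not_le] using hx2
  choose x hx₁ hx₂ hx₃ using hseq
  have hdpos : ∀ k, (0 : ℝ) < dist (x k) a := fun k =>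
    lt_trans (by positivity) (hx₃ k)
  set y : ℕ → Euc n := fun k => a + (dist (x k) a)⁻¹ • (x k - a) with hy_def
  have hy_sphere : ∀ k, y k ∈ Metric.sphere a 1 := by
    intro k
    have hv : y k - a = (dist (x k) a)⁻¹ • (x k - a) := add_sub_cancel_left a _
    have hd : dist (x k) a = ‖x k - a‖ := dist_eq_norm _ _
    have hd0 : ‖x k - a‖ ≠ 0 := by rw [← hd]; exact (hdpos k).ne'
    have : dist (y k) a = 1 := by
      rw [dist_eq_norm, hv, norm_smul, Real.norm_eq_abs, abs_inv, abs_of_pos (hdpos k), hd,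
        inv_mul_cancel₀ hd0]
    exact Metric.mem_sphere.mpr this
  have hyK : ∀ k, y k ∈ K₀ := by
    intro k
    have hd1 : (1 : ℝ) ≤ dist (x k) a := le_trans (by norm_num) (hx₃ k).le
    have ht0 : (0 : ℝ) ≤ (dist (x k) a)⁻¹ := (inv_nonneg).mpr (hdpos k).le
    have ht1 : (dist (x k) a)⁻¹ ≤ 1 := inv_le_one_of_one_le₀ hd1
    have hco : y k = (1 - (dist (x k) a)⁻¹) • a + (dist (x k) a)⁻¹ • x k := by
      show a + (dist (x k) a)⁻¹ • (x k - a) = _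
      rw [sub_smul, one_smul, smul_sub]; abel
    rw [hco]
    exact hK₀c haK (hx₁ k) (by linarith) ht0 (by ring)
  obtain ⟨L, hL, φ, hφ, hlim⟩ := (isCompact_sphere a 1).tendsto_subseq hy_sphere
  have hLK : L ∈ K₀ := hK₀.mem_of_tendsto hlim (Filter.Eventually.of_forall fun k => hyK _)
  have hfc : Continuous fun v : Euc n => ⟪v - a, u⟫ :=
    (continuous_id.sub continuous_const).inner continuous_const
  have h1 : Filter.Tendsto (fun k => ⟪y (φ k) - a, u⟫) Filter.atTop (nhds ⟪L - a, u⟫) :=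
    (hfc.continuousAt.tendsto).comp hlim
  have hfy : ∀ k, ⟪y k - a, u⟫ = (dist (x k) a)⁻¹ * ⟪x k - a, u⟫ := by
    intro k
    have hv : y k - a = (dist (x k) a)⁻¹ • (x k - a) := add_sub_cancel_left a _
    rw [hv, real_inner_smul_left]
  have hxa : ∀ k, x k ≠ a := by
    intro k h
    have := hdpos k
    rw [h, dist_self] at this
    exact lt_irrefl _ this
  have h2 : Filter.Tendsto (fun k => ⟪y (φ k) - a, u⟫) Filter.atTop (nhds 0) := by
    apply squeeze_zero (g := fun k : ℕ => c * ((k : ℝ) + 1)⁻¹)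
    · intro k
      rw [hfy]
      have := (hpos (x (φ k)) (hx₁ _) (hxa _)).le
      positivity
    · intro k
      show ⟪y (φ k) - a, u⟫ ≤ c * ((k : ℝ) + 1)⁻¹
      rw [hfy]
      have hk : (k : ℝ) + 1 ≤ (φ k : ℝ) + 1 := by
        have h := (Nat.cast_le (α := ℝ)).mpr ((hφ.le_apply : k ≤ φ k))
        linarith
      have hd : (k : ℝ) + 1 < dist (x (φ k)) a := lt_of_le_of_lt hk (hx₃ _)
      have hkpos : (0 : ℝ) < (k : ℝ) + 1 := by positivity
      have hinv : (dist (x (φ k)) a)⁻¹ ≤ ((k : ℝ) + 1)⁻¹ :=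
        inv_anti₀ hkpos hd.le
      have hfx := hx₂ (φ k)
      have hfxnn := (hpos (x (φ k)) (hx₁ _) (hxa _)).le
      have hdp := hdpos (φ k)
      calc (dist (x (φ k)) a)⁻¹ * ⟪x (φ k) - a, u⟫ ≤ (dist (x (φ k)) a)⁻¹ * c := by
            apply mul_le_mul_of_nonneg_left hfx (by positivity)
        _ ≤ ((k : ℝ) + 1)⁻¹ * c := mul_le_mul_of_nonneg_right hinv hc
        _ = c * ((k : ℝ) + 1)⁻¹ := mul_comm _ _
    · have : Filter.Tendsto (fun k : ℕ => ((k : ℝ) + 1)⁻¹) Filter.atTop (nhds 0) := by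
        apply tendsto_inv_atTop_zero.comp
        exact Filter.tendsto_atTop_add_const_right _ _ tendsto_natCast_atTop_atTop
      simpa using this.const_mul c
  have hfL : ⟪L - a, u⟫ = 0 := tendsto_nhds_unique h1 h2
  have hLa : L = a := by
    by_contra hne
    exact (ne_of_gt (hpos L hLK hne)) hfL
  have : dist L a = 1 := Metric.mem_sphere.mp hL
  rw [hLa, dist_self] at this
  norm_num at this

lemma interior_slab {n : ℕ} {u : Euc n} (hu : u ≠ 0) (a : Euc n) (z : ℝ) :
    interior {x : Euc n | ⟪x - a, u⟫ ≤ z} = {x : Euc n | ⟪x - a, u⟫ < z} := by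
  set L : Euc n →L[ℝ] ℝ := innerSL ℝ u with hL
  have hLx : ∀ x : Euc n, L x = ⟪u, x⟫ := fun x => rfl
  have hset : {x : Euc n | ⟪x - a, u⟫ ≤ z} = L ⁻¹' (Iic (z + ⟪u, a⟫)) := by
    ext x
    simp only [mem_setOf_eq, mem_preimage, mem_Iic, hLx]
    rw [real_inner_comm, inner_sub_right]
    constructor <;> intro h <;> linarith
  have hsurj : Function.Surjective L := by
    intro cc
    refine ⟨(cc / ‖u‖ ^ 2) • u, ?_⟩
    rw [hLx, real_inner_smul_right, real_inner_self_eq_norm_sq]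
    have : ‖u‖ ≠ 0 := norm_ne_zero_iff.mpr hu
    field_simp
  rw [hset, L.interior_preimage hsurj, interior_Iic]
  ext x
  simp only [mem_preimage, mem_Iio, mem_setOf_eq, hLx]
  rw [show (⟪x - a, u⟫ : ℝ) = ⟪u, x⟫ - ⟪u, a⟫ from by rw [real_inner_comm, inner_sub_right]]
  constructor <;> intro h <;> linarith

/-- **Proposition 9: a convex part exists.** If `r` is strictly locally convex at `o`,
witnessed by a closed convex body `K₀` and a nonzero vector `u`, then there is a
convex part centered at `o`: a connected open subset `𝒞` of `M` containing `o`, mapped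
by `r` homeomorphically onto `C = frontier K ∩ {x | ⟪x - r o, u⟫ < z}` for some compact
convex body `K` and some height `z > 0`, with `frontier K \ C` contained in the
hyperplane `{x | ⟪x - r o, u⟫ = z}`. -/
theorem convex_part_exists {n : ℕ} (hn : 3 ≤ n)
    {M : Type*} [TopologicalSpace M] [T2Space M] [ConnectedSpace M]
    (hman : IsTopManifoldOfDim M (n - 1))
    (r : M → Euc n) (hr : Continuous r)
    (hbd : Bornology.IsBounded (Set.range r))
    (hcompl : CompleteWrtLengthDist r)
    (hlc : ∀ p : M, IsLocallyConvexAt r p)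
    (o : M) (K₀ : Set (Euc n)) (u : Euc n) (hu : u ≠ 0)
    (hK₀ : IsClosed K₀) (hK₀c : Convex ℝ K₀) (hK₀i : (interior K₀).Nonempty)
    (hstrict : ∀ x ∈ K₀ \ {r o}, 0 < ⟪x - r o, u⟫)
    (hloc : ∃ (U : Set M) (V : Set (Euc n)), IsOpen U ∧ o ∈ U ∧
      V ⊆ frontier K₀ ∧ r o ∈ V ∧
      (∃ W : Set (Euc n), IsOpen W ∧ V = W ∩ frontier K₀) ∧
      ∃ e : U ≃ₜ V, ∀ x : U, (e x : Euc n) = r x) :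
    ∃ z : ℝ, 0 < z ∧
      ∃ K : Set (Euc n), IsCompact K ∧ Convex ℝ K ∧ (interior K).Nonempty ∧
        ∃ 𝒞 : Set M, IsOpen 𝒞 ∧ IsConnected 𝒞 ∧ o ∈ 𝒞 ∧
          (∃ e : 𝒞 ≃ₜ ↥(frontier K ∩ {x | ⟪x - r o, u⟫ < z}),
            ∀ x : 𝒞, (e x : Euc n) = r x) ∧
          frontier K \ (frontier K ∩ {x | ⟪x - r o, u⟫ < z}) ⊆
            {x | ⟪x - r o, u⟫ = z} := by
  classical
  obtain ⟨U, V, hUo, hoU, hVfr, hroV, ⟨W, hWo, hVW⟩, e, he⟩ := hloc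
  set a : Euc n := r o with ha_def
  have hfc : Continuous fun x : Euc n => ⟪x - a, u⟫ :=
    (continuous_id.sub continuous_const).inner continuous_const
  have hafr : a ∈ frontier K₀ := hVfr hroV
  have haK₀ : a ∈ K₀ := by
    have := frontier_subset_closure hafr
    rwa [hK₀.closure_eq] at this
  have haW : a ∈ W := by
    have := hroV; rw [hVW] at this; exact this.1
  have hfpos : ∀ x ∈ K₀, x ≠ a → 0 < ⟪x - a, u⟫ := fun x hx hxa =>
    hstrict x ⟨hx, hxa⟩
  have hfnn : ∀ x ∈ K₀, 0 ≤ ⟪x - a, u⟫ := by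
    intro x hx
    by_cases hxa : x = a
    · simp [hxa]
    · exact (hfpos x hx hxa).le
  obtain ⟨v₀, hv₀⟩ := hK₀i
  have hv₀K : v₀ ∈ K₀ := interior_subset hv₀
  have hv₀a : v₀ ≠ a := by
    rintro rfl
    rw [hK₀.frontier_eq] at hafr
    exact hafr.2 hv₀
  have hfv₀ : 0 < ⟪v₀ - a, u⟫ := hfpos v₀ hv₀K hv₀a
  -- slices are compact
  have hcpt : ∀ c : ℝ, 0 ≤ c → IsCompact (K₀ ∩ {x | ⟪x - a, u⟫ ≤ c}) := by
    intro c hc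
    exact Metric.isCompact_of_isClosed_isBounded
      (hK₀.inter (isClosed_le hfc continuous_const))
      (slice_isBounded hK₀ hK₀c haK₀ hc hfpos)
  -- choose z
  set S : Set (Euc n) := (frontier K₀ ∩ {x | ⟪x - a, u⟫ ≤ 1}) \ W ∪ {v₀} with hS_def
  have hScpt : IsCompact S := by
    apply IsCompact.union _ isCompact_singleton
    apply Metric.isCompact_of_isClosed_isBounded
    · exact (isClosed_frontier.inter (isClosed_le hfc continuous_const)).sdiff hWo
    · apply (slice_isBounded hK₀ hK₀c haK₀ zero_le_one hfpos).subset
      intro x hx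
      exact ⟨(hK₀.frontier_eq ▸ hx.1.1).1, hx.1.2⟩
  have hSne : S.Nonempty := ⟨v₀, Or.inr rfl⟩
  obtain ⟨m, hmS, hmin⟩ := hScpt.exists_isMinOn hSne hfc.continuousOn
  have hε : 0 < ⟪m - a, u⟫ := by
    rcases hmS with hm | hm
    · have hmK : m ∈ K₀ := (hK₀.frontier_eq ▸ hm.1.1).1
      apply hfpos m hmK
      rintro rfl
      exact hm.2 haW
    · rw [mem_singleton_iff] at hm
      rw [hm]; exact hfv₀
  set ε : ℝ := ⟪m - a, u⟫ with hε_def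
  set z : ℝ := min (ε / 2) (min 1 ⟪v₀ - a, u⟫ / 2) with hz_def
  have hz : 0 < z := by
    apply lt_min (by linarith)
    have : 0 < min 1 ⟪v₀ - a, u⟫ := lt_min one_pos hfv₀
    linarith
  have hz1 : z ≤ 1 := by
    have h1 : min 1 ⟪v₀ - a, u⟫ / 2 ≤ 1 / 2 := by
      have := min_le_left 1 ⟪v₀ - a, u⟫; linarith
    have := min_le_right (ε / 2) (min 1 ⟪v₀ - a, u⟫ / 2)
    linarith
  have hzv₀ : z < ⟪v₀ - a, u⟫ := by
    have h1 : min 1 ⟪v₀ - a, u⟫ / 2 ≤ ⟪v₀ - a, u⟫ / 2 := by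
      have := min_le_right 1 ⟪v₀ - a, u⟫; linarith
    have := min_le_right (ε / 2) (min 1 ⟪v₀ - a, u⟫ / 2)
    linarith
  have hzε : z < ε := by
    have := min_le_left (ε / 2) (min 1 ⟪v₀ - a, u⟫ / 2)
    linarith
  -- z-sublevel points of the boundary are in W
  have hcapW : ∀ x ∈ frontier K₀, ⟪x - a, u⟫ < z → x ∈ W := by
    intro x hx hxz
    by_contra hxw
    have hxS : x ∈ S := Or.inl ⟨⟨hx, show (⟪x - a, u⟫ : ℝ) ≤ 1 by linarith⟩, hxw⟩
    have := hmin hxS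
    simp only [mem_setOf_eq] at this
    have : ε ≤ ⟪x - a, u⟫ := this
    linarith
  -- the convex body K
  set K : Set (Euc n) := K₀ ∩ {x | ⟪x - a, u⟫ ≤ z} with hK_def
  have hKcl : IsClosed K := hK₀.inter (isClosed_le hfc continuous_const)
  have hKcpt : IsCompact K := hcpt z hz.le
  have hKconv : Convex ℝ K := by
    apply hK₀c.inter
    intro p hp q hq b c hb hc hbc
    simp only [mem_setOf_eq] at hp hq ⊢
    have hsub : b • p + c • q - a = b • (p - a) + c • (q - a) := by
      calc b • p + c • q - a = b • p + c • q - (b + c) • a := by rw [hbc, one_smul]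
        _ = b • (p - a) + c • (q - a) := by rw [add_smul, smul_sub, smul_sub]; abel
    rw [hsub, inner_add_left, real_inner_smul_left, real_inner_smul_left]
    nlinarith
  have hIntK : interior K = interior K₀ ∩ {x | ⟪x - a, u⟫ < z} := by
    rw [hK_def, interior_inter, interior_slab hu]
  -- characterization of the frontier of K below level z
  have hfrchar : ∀ x : Euc n, ⟪x - a, u⟫ < z → (x ∈ frontier K ↔ x ∈ frontier K₀) := by
    intro x hxz
    rw [hKcl.frontier_eq, hK₀.frontier_eq, hIntK]
    simp only [mem_diff, mem_inter_iff, mem_setOf_eq, hK_def]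
    constructor
    · rintro ⟨⟨h1, _⟩, h2⟩
      exact ⟨h1, fun hi => h2 ⟨hi, hxz⟩⟩
    · rintro ⟨h1, h2⟩
      exact ⟨⟨h1, hxz.le⟩, fun hi => h2 hi.1⟩
  have hfa : (⟪a - a, u⟫ : ℝ) = 0 := by simp
  have hafrK : a ∈ frontier K := (hfrchar a (by rw [hfa]; exact hz)).mpr hafr
  -- interior point low in K
  have hintw : ∀ c : ℝ, 0 ≤ c → c < z →
      ∃ w ∈ interior K, c < ⟪w - a, u⟫ := by
    intro c hc hcz
    set s₁ : ℝ := (c + z) / (2 * ⟪v₀ - a, u⟫) with hs₁_def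
    have hs₁pos : 0 < s₁ := by positivity
    have hs₁fv : s₁ * ⟪v₀ - a, u⟫ = (c + z) / 2 := by
      obtain ⟨t, ht⟩ : ∃ t : ℝ, t = ⟪v₀ - a, u⟫ := ⟨_, rfl⟩
      have ht0 : t ≠ 0 := by rw [ht]; exact ne_of_gt hfv₀
      rw [hs₁_def, ← ht]
      field_simp
    have hs₁lt : s₁ < 1 := by
      rw [hs₁_def, div_lt_one (by positivity)]
      nlinarith
    set w : Euc n := s₁ • v₀ + (1 - s₁) • a with hw_def
    have hwint₀ : w ∈ interior K₀ :=
      hK₀c.combo_interior_closure_mem_interior hv₀ (subset_closure haK₀)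
        hs₁pos (by linarith) (by ring)
    have hwf : ⟪w - a, u⟫ = (c + z) / 2 := by
      have : w - a = s₁ • (v₀ - a) := by
        rw [hw_def, sub_smul, one_smul, smul_sub]; abel
      rw [this, real_inner_smul_left, hs₁fv]
    refine ⟨w, ?_, ?_⟩
    · rw [hIntK]
      exact ⟨hwint₀, by rw [mem_setOf_eq, hwf]; linarith⟩
    · rw [hwf]; linarith
  have hKint : (interior K).Nonempty := by
    obtain ⟨w, hw, _⟩ := hintw 0 le_rfl hz
    exact ⟨w, hw⟩
  -- the cap C
  set C : Set (Euc n) := frontier K ∩ {x | ⟪x - a, u⟫ < z} with hC_def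
  have hCfr₀ : ∀ x ∈ C, x ∈ frontier K₀ := fun x hx => (hfrchar x hx.2).mp hx.1
  have hCV : ∀ x ∈ C, x ∈ V := by
    intro x hx
    have hx₀ := hCfr₀ x hx
    rw [hVW]
    exact ⟨hcapW x hx₀ hx.2, hx₀⟩
  have hfrKsub : frontier K ⊆ K := hKcl.frontier_subset
  have hCconn : IsConnected C := by
    constructor
    · exact ⟨a, hafrK, by rw [mem_setOf_eq, hfa]; exact hz⟩
    · apply cap_isPreconnected hKcpt hKconv hafrK hz
      · intro y hy
        exact hfnn y hy.1
      · intro x hxf hxz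
        have hxK₀ : x ∈ K₀ := (hfrKsub hxf).1
        exact hintw ⟪x - a, u⟫ (hfnn x hxK₀) hxz
  -- the domain 𝒞
  set 𝒞 : Set M := U ∩ r ⁻¹' {x | ⟪x - a, u⟫ < z} with h𝒞_def
  have h𝒞o : IsOpen 𝒞 := hUo.inter ((isOpen_lt hfc continuous_const).preimage hr)
  have ho𝒞 : o ∈ 𝒞 := ⟨hoU, by simp only [mem_preimage, mem_setOf_eq, ← ha_def, hfa]; exact hz⟩
  -- r maps 𝒞 into C
  have hrC : ∀ p (hp : p ∈ 𝒞), r p ∈ C := by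
    rintro p ⟨hpU, hpz⟩
    have hrv : r p ∈ V := by
      have := (e ⟨p, hpU⟩).2
      rwa [he ⟨p, hpU⟩] at this
    have hrfr₀ : r p ∈ frontier K₀ := hVfr hrv
    have hpz' : ⟪r p - a, u⟫ < z := hpz
    exact ⟨(hfrchar (r p) hpz').mpr hrfr₀, hpz'⟩
  -- the homeomorphism
  have hsymm : ∀ x (hx : x ∈ C), ((e.symm ⟨x, hCV x hx⟩ : U) : M) ∈ 𝒞 := by
    intro x hx
    refine ⟨(e.symm ⟨x, hCV x hx⟩).2, ?_⟩
    have : r ((e.symm ⟨x, hCV x hx⟩ : U) : M) = x := by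
      rw [← he (e.symm ⟨x, hCV x hx⟩), e.apply_symm_apply]
    simp only [mem_preimage, mem_setOf_eq, this]
    exact hx.2
  set e' : ↥𝒞 ≃ₜ ↥C :=
    { toFun := fun p => ⟨r p, hrC p p.2⟩
      invFun := fun x => ⟨(e.symm ⟨x, hCV x x.2⟩ : U), hsymm x x.2⟩
      left_inv := by
        rintro ⟨p, hp⟩
        have h1 : e ⟨p, hp.1⟩ = ⟨r p, hCV _ (hrC p hp)⟩ := by
          apply Subtype.ext
          exact he ⟨p, hp.1⟩
        apply Subtype.ext
        show ((e.symm ⟨r p, _⟩ : U) : M) = p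
        rw [← h1, e.symm_apply_apply]
      right_inv := by
        rintro ⟨x, hx⟩
        apply Subtype.ext
        show r ((e.symm ⟨x, hCV x hx⟩ : U) : M) = x
        rw [← he (e.symm ⟨x, hCV x hx⟩), e.apply_symm_apply]
      continuous_toFun := by
        apply Continuous.subtype_mk
        exact hr.comp continuous_subtype_val
      continuous_invFun := by
        apply Continuous.subtype_mk
        apply continuous_subtype_val.comp
        apply e.symm.continuous.comp
        apply Continuous.subtype_mk
        exact continuous_subtype_val } with he'_def
  have h𝒞conn : IsConnected 𝒞 := by
    have hCS : ConnectedSpace ↥C := isConnected_iff_connectedSpace.mp hCconn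
    have hcont : Continuous fun x : ↥C => ((e'.symm x : ↥𝒞) : M) :=
      continuous_subtype_val.comp e'.symm.continuous
    have hrange := isConnected_range hcont
    have : range (fun x : ↥C => ((e'.symm x : ↥𝒞) : M)) = 𝒞 := by
      rw [show (fun x : ↥C => ((e'.symm x : ↥𝒞) : M)) = Subtype.val ∘ e'.symm from rfl,
        range_comp, e'.symm.surjective.range_eq, image_univ, Subtype.range_coe]
    rwa [this] at hrange
  refine ⟨z, hz, K, hKcpt, hKconv, hKint, 𝒞, h𝒞o, h𝒞conn, ho𝒞, ⟨e', fun x => rfl⟩, ?_⟩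
  rintro x ⟨hxfr, hxC⟩
  have hxK : x ∈ K := hfrKsub hxfr
  have hxle : ⟪x - a, u⟫ ≤ z := hxK.2
  have : ¬(⟪x - a, u⟫ < z) := fun h => hxC ⟨hxfr, h⟩
  simp only [mem_setOf_eq]
  linarith [lt_of_le_of_ne hxle]
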